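/- Let K be a nontrivial commutative unital ring, G a small category, and s_1,…,s_n ∈ G. For s ∈ G let R_s ⊆ M_n(K) be the K-span of the matrix units e_{ij} with s_i s = s_j (composition defined). Then the family (R_s)_{s∈G} is a G-filter in R = Σ_s R_s: R_s R_t ⊆ R_{st} whenever (s,t) is composable, and R_s R_t = 0 otherwise. Furthermore, if s_i s ∈ {s_1,…,s_n} whenever (s_i, s) is composable, then R_s R_t = R_{st} for all composable (s,t). -/

import Mathlib

open Pointwise CategoryTheory

/-- `SComp a b c` : the morphisms `a` and `b` (as objects of the total morphism type) are
composable in the sense `d(a) = c(b)`, and `c = ab` is their composite. -/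
def SComp {Obj : Type*} [Category Obj] (a b c : Σ e f : Obj, e ⟶ f) : Prop :=
  ∃ h : b.2.1 = a.1, c = ⟨b.1, a.2.1, (b.2.2 ≫ eqToHom h) ≫ a.2.2⟩

/-- The homogeneous component `R_t ⊆ M_n(K)`: the `K`-span of the matrix units `e_{ij}`
with `s_i t = s_j`. -/
def matDeg {Obj : Type*} [Category Obj] (K : Type*) [CommRing K] {n : ℕ}
    (s : Fin n → Σ e f : Obj, e ⟶ f) (t : Σ e f : Obj, e ⟶ f) :
    Submodule K (Matrix (Fin n) (Fin n) K) :=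
  Submodule.span K
    {M | ∃ i j : Fin n, SComp (s i) t (s j) ∧ M = Matrix.single i j (1 : K)}

lemma SComp_assoc {Obj : Type*} [Category Obj] {a b c x y z : Σ e f : Obj, e ⟶ f}
    (h1 : SComp a b c) (h2 : SComp x a y) (h3 : SComp y b z) : SComp x c z := by
  obtain ⟨a1, a2, fa⟩ := a
  obtain ⟨b1, b2, fb⟩ := b
  obtain ⟨x1, x2, fx⟩ := x
  obtain ⟨h1, rfl⟩ := h1
  obtain ⟨h2, rfl⟩ := h2
  obtain ⟨h3, rfl⟩ := h3
  refine ⟨h2, ?_⟩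
  simp

lemma SComp_right {Obj : Type*} [Category Obj] {a b c x y z : Σ e f : Obj, e ⟶ f}
    (h1 : SComp a b c) (h2 : SComp x c z) (h3 : SComp x a y) : SComp y b z := by
  obtain ⟨a1, a2, fa⟩ := a
  obtain ⟨b1, b2, fb⟩ := b
  obtain ⟨x1, x2, fx⟩ := x
  obtain ⟨h1, rfl⟩ := h1
  obtain ⟨h3, rfl⟩ := h3
  obtain ⟨h2, rfl⟩ := h2
  refine ⟨h1, ?_⟩
  simp

/-- The family `(R_t)_{t ∈ mor(G)}` is a `G`-filter in `R = ∑ R_t`: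
`R_a R_b ⊆ R_{ab}` for composable pairs and `R_a R_b = 0` otherwise; it is a strong filter
provided `s_i b ∈ {s_1, …, s_n}` whenever `(s_i, b)` is composable. -/
theorem matDeg_filter {Obj : Type*} [Category Obj] (K : Type*) [CommRing K] [Nontrivial K]
    {n : ℕ} (s : Fin n → Σ e f : Obj, e ⟶ f) :
    (∀ a b c : Σ e f : Obj, e ⟶ f, SComp a b c →
      matDeg K s a * matDeg K s b ≤ matDeg K s c) ∧
    (∀ a b : Σ e f : Obj, e ⟶ f, (¬∃ c, SComp a b c) →
      matDeg K s a * matDeg K s b = ⊥) ∧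
    ((∀ (i : Fin n) (b c : Σ e f : Obj, e ⟶ f), SComp (s i) b c → ∃ j : Fin n, s j = c) →
      ∀ a b c : Σ e f : Obj, e ⟶ f, SComp a b c →
        matDeg K s a * matDeg K s b = matDeg K s c) := by
  have key1 : ∀ a b c : Σ e f : Obj, e ⟶ f, SComp a b c →
      matDeg K s a * matDeg K s b ≤ matDeg K s c := by
    intro a b c habc
    rw [matDeg, matDeg, Submodule.span_mul_span, Submodule.span_le]
    rintro M ⟨p, ⟨i, j, hij, rfl⟩, q, ⟨k, l, hkl, rfl⟩, rfl⟩
    dsimp only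
    by_cases hjk : j = k
    · subst hjk
      rw [Matrix.single_mul_single_same, one_mul]
      exact Submodule.subset_span ⟨i, l, SComp_assoc habc hij hkl, rfl⟩
    · rw [Matrix.single_mul_single_of_ne (h := hjk)]
      exact Submodule.zero_mem _
  refine ⟨key1, ?_, ?_⟩
  · intro a b hnc
    rw [eq_bot_iff, matDeg, matDeg, Submodule.span_mul_span, Submodule.span_le]
    rintro M ⟨p, ⟨i, j, hij, rfl⟩, q, ⟨k, l, hkl, rfl⟩, rfl⟩
    dsimp only
    by_cases hjk : j = k
    · subst hjk
      exfalso
      apply hnc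
      obtain ⟨h1, hsj⟩ := hij
      obtain ⟨h2, _⟩ := hkl
      rw [hsj] at h2
      exact ⟨_, h2, rfl⟩
    · rw [Matrix.single_mul_single_of_ne (h := hjk)]
      exact Submodule.zero_mem _
  · intro hstrong a b c habc
    refine le_antisymm (key1 a b c habc) ?_
    rw [matDeg, Submodule.span_le]
    rintro M ⟨i, l, hil, rfl⟩
    have hcomp : a.2.1 = (s i).1 := by
      obtain ⟨h1, hc⟩ := habc
      obtain ⟨h2, _⟩ := hil
      rw [hc] at h2
      exact h2
    have hy : SComp (s i) a ⟨a.1, (s i).2.1, (a.2.2 ≫ eqToHom hcomp) ≫ (s i).2.2⟩ :=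
      ⟨hcomp, rfl⟩
    obtain ⟨j, hj⟩ := hstrong i a _ hy
    rw [← hj] at hy
    have hjl : SComp (s j) b (s l) := SComp_right habc hil hy
    have : Matrix.single i l (1 : K)
        = Matrix.single i j (1 : K) * Matrix.single j l (1 : K) := by
      rw [Matrix.single_mul_single_same, one_mul]
    rw [this]
    exact Submodule.mul_mem_mul
      (Submodule.subset_span ⟨i, j, hy, rfl⟩)
      (Submodule.subset_span ⟨j, l, hjl, rfl⟩)
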